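/- Let g₀ > 0, p₀ ∈ ℝ, γ ≥ 0, and s₀ = g₀² + p₀². Define p₊(t) = (p₀ + t(g₀² − p₀² − γg₀p₀)) / (−g₀²t² + (p₀t − 1)² + γg₀t(p₀t − 1)) on the maximal interval around 0 where the denominator is positive. Then p₊(0) = p₀, p₊'(0) = s₀, and p₊ satisfies the differential equation p'' = 6p'p − 4p³ + 2γ(p' − p²)^{3/2} on its domain, with p₊' − p₊² > 0 there. -/

import Mathlib

theorem stmt_6 (g₀ p₀ γ : ℝ) (hg : 0 < g₀) (hγ : 0 ≤ γ)
    (s₀ : ℝ) (hs : s₀ = g₀^2 + p₀^2)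
    (den : ℝ → ℝ)
    (hden : den = fun t => -g₀^2*t^2 + (p₀*t - 1)^2 + γ*g₀*t*(p₀*t - 1))
    (p : ℝ → ℝ)
    (hp : p = fun t => (p₀ + t*(g₀^2 - p₀^2 - γ*g₀*p₀)) / den t)
    -- I is the maximal interval around 0 on which the denominator is positive
    (I : Set ℝ) (hI : I = {t : ℝ | ∀ s ∈ Set.uIcc 0 t, 0 < den s}) :
    p 0 = p₀ ∧ deriv p 0 = s₀ ∧
    ∀ t ∈ I,
      deriv (deriv p) t
        = 6 * deriv p t * p t - 4 * (p t)^3 + 2*γ*(deriv p t - (p t)^2) ^ ((3:ℝ)/2) ∧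
      0 < deriv p t - (p t)^2 := by
  set c : ℝ := g₀^2 - p₀^2 - γ*g₀*p₀ with hc
  set A : ℝ := γ*g₀*p₀ + p₀^2 - g₀^2 with hA
  set B : ℝ := -(2*p₀) - γ*g₀ with hB
  have hcont : Continuous den := by rw [hden]; continuity
  have hdv : ∀ s : ℝ, den s = A*s^2 + B*s + 1 := by
    intro s; rw [hden, hA, hB]; ring
  have hdeq : den = fun s => A*s^2 + B*s + 1 := funext hdv
  have hden_deriv : ∀ s : ℝ, HasDerivAt den (2*A*s + B) s := by
    intro s
    rw [hdeq]
    have h := (((hasDerivAt_pow 2 s).const_mul A).add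
      ((hasDerivAt_id s).const_mul B)).add_const 1
    refine h.congr_deriv ?_
    norm_num
    ring
  have hnum_deriv : ∀ s : ℝ, HasDerivAt (fun x : ℝ => p₀ + x*c) c s := by
    intro s
    simpa using ((hasDerivAt_id s).mul_const c).const_add p₀
  set F : ℝ → ℝ := fun s => (c * den s - (p₀ + s*c) * (2*A*s + B)) / (den s)^2 with hF
  have hq : ∀ s : ℝ, den s ≠ 0 → HasDerivAt p (F s) s := by
    intro s hsne
    rw [hp]
    exact (hnum_deriv s).div (hden_deriv s) hsne
  have hderivp : ∀ s : ℝ, den s ≠ 0 → deriv p s = F s := fun s hs => (hq s hs).deriv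
  have hpv : ∀ s : ℝ, p s = (p₀ + s*c) / den s := by intro s; rw [hp]
  have hd0 : den 0 = 1 := by rw [hdv 0]; ring
  refine ⟨?_, ?_, ?_⟩
  · rw [hpv 0, hd0]; simp
  · have h0 : den 0 ≠ 0 := by rw [hd0]; norm_num
    rw [hderivp 0 h0, hF]
    simp only
    rw [hd0, hA, hB, hc, hs]
    ring
  · intro t htI
    rw [hI] at htI
    have hdt : 0 < den t := htI t Set.right_mem_uIcc
    have hlin_deriv : HasDerivAt (fun x : ℝ => 2*A*x + B) (2*A) t := by
      simpa using ((hasDerivAt_id t).const_mul (2*A)).add_const B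
    have hN : HasDerivAt (fun s : ℝ => c * den s - (p₀ + s*c) * (2*A*s + B))
        (c * (2*A*t + B) - (c * (2*A*t + B) + (p₀ + t*c) * (2*A))) t :=
      ((hden_deriv t).const_mul c).sub ((hnum_deriv t).mul hlin_deriv)
    have hF2 : HasDerivAt F
        ((-((p₀ + t*c) * (2*A)) * den t
          - 2*((c * den t - (p₀ + t*c) * (2*A*t + B)) * (2*A*t + B))) / (den t)^3) t := by
      have h := hN.div ((hden_deriv t).pow 2) (pow_ne_zero 2 hdt.ne')
      rw [hF]
      refine h.congr_deriv ?_
      simp only [Pi.pow_apply]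
      norm_num
      rw [eq_comm, div_eq_div_iff (pow_ne_zero 3 hdt.ne') (pow_ne_zero 2 (pow_ne_zero 2 hdt.ne'))]
      push_cast
      ring
    have hev : deriv p =ᶠ[nhds t] F := by
      have hopen : IsOpen {s : ℝ | 0 < den s} := isOpen_lt continuous_const hcont
      filter_upwards [hopen.mem_nhds hdt] with s hs using hderivp s hs.ne'
    have hdd : deriv (deriv p) t = deriv F t := hev.deriv_eq
    have hkey : deriv p t - (p t)^2 = (g₀ / den t)^2 := by
      rw [hderivp t hdt.ne', hpv t, hF]
      simp only
      rw [div_pow, div_pow, div_sub_div_same]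
      congr 1
      rw [hdv t, hA, hB, hc]
      ring
    have hpos : 0 < deriv p t - (p t)^2 := by
      rw [hkey]; exact pow_pos (div_pos hg hdt) 2
    have hpow : (deriv p t - (p t)^2) ^ ((3:ℝ)/2) = (g₀ / den t)^3 := by
      have ha : (0:ℝ) < g₀ / den t := div_pos hg hdt
      rw [hkey, ← Real.rpow_natCast (g₀ / den t) 2, ← Real.rpow_natCast (g₀ / den t) 3,
        ← Real.rpow_mul ha.le]
      norm_num
    refine ⟨?_, hpos⟩
    have hcomb : ∀ X y z D : ℝ, D ≠ 0 →
        6*(X/D^2)*(y/D) - 4*(y/D)^3 + 2*γ*(z/D)^3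
          = (6*X*y - 4*y^3 + 2*γ*z^3)/D^3 := by
      intro X y z D hD; field_simp
    rw [hdd, hF2.deriv, hpow, hderivp t hdt.ne', hpv t, hF]
    simp only
    rw [hcomb _ _ _ _ hdt.ne']
    congr 1
    rw [hdv t, hA, hB, hc]
    ring
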